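/- Let k ≥ 1 and let 𝓔 be a linear operator on the space of k×k complex matrices that is self-adjoint with respect to the Frobenius (Hilbert–Schmidt) inner product ⟨X,Y⟩ = tr(X†Y). Suppose there is a matrix Λ with ‖Λ‖_F = 1 and 𝓔(Λ) = Λ, and a real number 0 ≤ λ < 1 such that ‖𝓔(X)‖_F ≤ λ‖X‖_F for every matrix X with ⟨Λ,X⟩ = 0. Then for all k×k matrices X, Y and every natural number n, |tr(Y† 𝓔ⁿ(X)) − tr(Y†Λ)·tr(Λ†X)| ≤ λⁿ · ‖X‖_F · ‖Y‖_F. -/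

import Mathlib

open scoped Matrix ComplexInnerProductSpace

noncomputable def frobNorm {k : ℕ} (X : Matrix (Fin k) (Fin k) ℂ) : ℝ :=
  Real.sqrt ((Xᴴ * X).trace.re)

noncomputable def matL {k : ℕ} : Matrix (Fin k) (Fin k) ℂ →ₗ[ℂ] EuclideanSpace ℂ (Fin k × Fin k) where
  toFun X := WithLp.toLp 2 (fun p : Fin k × Fin k => X p.1 p.2)
  map_add' X Y := rfl
  map_smul' c X := rfl

lemma inner_matL {k : ℕ} (X Y : Matrix (Fin k) (Fin k) ℂ) :
    ⟪matL X, matL Y⟫ = (Xᴴ * Y).trace := by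
  simp [matL, PiLp.inner_apply, Matrix.trace, Matrix.diag, Matrix.mul_apply,
    Matrix.conjTranspose_apply, RCLike.inner_apply, Fintype.sum_prod_type]
  rw [Finset.sum_comm]
  exact Finset.sum_congr rfl fun _ _ => Finset.sum_congr rfl fun _ _ => mul_comm _ _

lemma frob_eq {k : ℕ} (X : Matrix (Fin k) (Fin k) ℂ) : frobNorm X = ‖matL X‖ := by
  rw [norm_eq_sqrt_re_inner (𝕜 := ℂ), inner_matL]
  rfl

theorem stmt0 {k : ℕ} (hk : 1 ≤ k)
    (ℰ : Module.End ℂ (Matrix (Fin k) (Fin k) ℂ))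
    (hsa : ∀ X Y : Matrix (Fin k) (Fin k) ℂ,
      (Xᴴ * ℰ Y).trace = ((ℰ X)ᴴ * Y).trace)
    (Λ : Matrix (Fin k) (Fin k) ℂ) (hΛnorm : frobNorm Λ = 1) (hΛfix : ℰ Λ = Λ)
    (lam : ℝ) (hlam0 : 0 ≤ lam) (hlam1 : lam < 1)
    (hgap : ∀ X : Matrix (Fin k) (Fin k) ℂ,
      (Λᴴ * X).trace = 0 → frobNorm (ℰ X) ≤ lam * frobNorm X) :
    ∀ (X Y : Matrix (Fin k) (Fin k) ℂ) (n : ℕ),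
      ‖(Yᴴ * ((ℰ ^ n) X)).trace - (Yᴴ * Λ).trace * (Λᴴ * X).trace‖
        ≤ lam ^ n * frobNorm X * frobNorm Y := by
  intro X Y n
  -- trace(ΛᴴΛ) = 1
  have hΛΛ : (Λᴴ * Λ).trace = 1 := by
    rw [← inner_matL, @inner_self_eq_norm_sq_to_K ℂ, ← frob_eq, hΛnorm]
    norm_num
  set c : ℂ := (Λᴴ * X).trace with hc
  set X' : Matrix (Fin k) (Fin k) ℂ := X - c • Λ with hX'
  have horth : (Λᴴ * X').trace = 0 := by
    simp [hX', Matrix.mul_sub, Matrix.mul_smul, Matrix.trace_sub, Matrix.trace_smul, hΛΛ, hc]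
  -- key induction
  have key : ∀ m : ℕ, (Λᴴ * ((ℰ ^ m) X')).trace = 0 ∧
      frobNorm ((ℰ ^ m) X') ≤ lam ^ m * frobNorm X' := by
    intro m
    induction m with
    | zero => simpa using horth
    | succ m ih =>
      have hpow : (ℰ ^ (m+1)) X' = ℰ ((ℰ ^ m) X') := by
        rw [pow_succ' ℰ m]; rfl
      constructor
      · rw [hpow, hsa, hΛfix, ih.1]
      · rw [hpow]
        calc frobNorm (ℰ ((ℰ ^ m) X')) ≤ lam * frobNorm ((ℰ ^ m) X') := hgap _ ih.1
          _ ≤ lam * (lam ^ m * frobNorm X') := by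
              exact mul_le_mul_of_nonneg_left ih.2 hlam0
          _ = lam ^ (m+1) * frobNorm X' := by ring
  -- the difference equals inner product of Y with ℰ^n X'
  have hdecomp : (ℰ ^ n) X = c • Λ + (ℰ ^ n) X' := by
    have : (ℰ ^ n) (c • Λ) = c • Λ := by
      induction n with
      | zero => rfl
      | succ m ih =>
        rw [pow_succ' ℰ m]
        show ℰ ((ℰ ^ m) (c • Λ)) = c • Λ
        rw [ih, map_smul, hΛfix]
    calc (ℰ ^ n) X = (ℰ ^ n) (c • Λ + X') := by congr 1; rw [hX']; abel
      _ = c • Λ + (ℰ ^ n) X' := by rw [map_add, this]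
  have hdiff : (Yᴴ * ((ℰ ^ n) X)).trace - (Yᴴ * Λ).trace * c
      = ⟪matL Y, matL ((ℰ ^ n) X')⟫ := by
    rw [hdecomp, inner_matL]
    simp [Matrix.mul_add, Matrix.mul_smul, Matrix.trace_add, Matrix.trace_smul]
    ring
  rw [hdiff]
  -- Cauchy–Schwarz and the norm bounds
  have hX'le : frobNorm X' ≤ frobNorm X := by
    rw [frob_eq, frob_eq]
    have hX : matL X = c • matL Λ + matL X' := by
      rw [hX', map_sub, map_smul]; abel
    have horth2 : ⟪(c • matL Λ : EuclideanSpace ℂ (Fin k × Fin k)), matL X'⟫ = 0 := by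
      rw [inner_smul_left, inner_matL, horth, mul_zero]
    have := norm_add_sq (𝕜 := ℂ) (E := EuclideanSpace ℂ (Fin k × Fin k)) (c • matL Λ) (matL X')
    rw [horth2] at this
    simp only [map_zero, mul_zero, add_zero] at this
    nlinarith [norm_nonneg (matL X'), norm_nonneg (c • matL Λ : EuclideanSpace ℂ (Fin k × Fin k)),
      norm_nonneg (matL X), sq_nonneg ‖(c • matL Λ : EuclideanSpace ℂ (Fin k × Fin k))‖, hX ▸ this]
  calc ‖⟪matL Y, matL ((ℰ ^ n) X')⟫‖
      ≤ ‖matL Y‖ * ‖matL ((ℰ ^ n) X')‖ := by exact norm_inner_le_norm _ _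
    _ = frobNorm ((ℰ ^ n) X') * frobNorm Y := by rw [← frob_eq, ← frob_eq]; ring
    _ ≤ (lam ^ n * frobNorm X') * frobNorm Y := by
        apply mul_le_mul_of_nonneg_right (key n).2
        rw [frob_eq]; exact norm_nonneg _
    _ ≤ lam ^ n * frobNorm X * frobNorm Y := by
        apply mul_le_mul_of_nonneg_right _ (by rw [frob_eq]; exact norm_nonneg _)
        exact mul_le_mul_of_nonneg_left hX'le (pow_nonneg hlam0 n)
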